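/- Let K be a field and (P, ≤) a finite poset admitting a chain-partition C_1, …, C_n together with a C-cut splitting each C_i into a nonempty lower part C_i^{low} and a nonempty upper part C_i^{up}. Let U, U^{low}, U^{up} be the Moebius matrices over K of P, P^{low}, and P^{up}, let ^c denote compression with respect to the chains, and let J = I + J_0 where J_0 is the chain-comparability adjacency matrix. If J is invertible over K, then ^c(U) = ^c(U^{low}) + ^c(U^{up}) − ^c(U^{low})·J·^c(U^{up}). -/

import Mathlib

open Matrix Finset

attribute [local instance] Classical.propDecidable

/-- The zeta matrix of a finite poset `Q` over `K`: entry `(x, y)` is `1` if `x ≤ y`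
and `0` otherwise. -/
noncomputable def zetaM (K : Type*) [Field K] (Q : Type*) [Fintype Q] [PartialOrder Q] :
    Matrix Q Q K :=
  Matrix.of fun x y => if x ≤ y then 1 else 0

/-- The Moebius matrix of a finite poset `Q` over `K`: the inverse of its zeta matrix. -/
noncomputable def moebiusM (K : Type*) [Field K] (Q : Type*) [Fintype Q] [PartialOrder Q] :
    Matrix Q Q K :=
  (zetaM K Q)⁻¹

/-- Compression of a matrix `M` (indexed by a type `Q` of poset elements, mapping to `P`
via `ι`) with respect to a family of chains `D : Fin n → Finset P`: the `(i,k)`-entry is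
the sum of the entries `M x y` with `ι x` in the `i`-th chain and `ι y` in the `k`-th
chain. -/
noncomputable def chainComp {K P : Type*} [Field K] {n : ℕ} (D : Fin n → Finset P)
    {Q : Type*} [Fintype Q] (ι : Q → P) (M : Matrix Q Q K) :
    Matrix (Fin n) (Fin n) K :=
  Matrix.of fun i k => ∑ x : Q, ∑ y : Q, if ι x ∈ D i ∧ ι y ∈ D k then M x y else 0

lemma zeta_isUnit (K : Type*) [Field K] (Q : Type*) [Fintype Q] [DecidableEq Q]
    [PartialOrder Q] :
    IsUnit (zetaM K Q) := by
  rw [Matrix.isUnit_iff_isUnit_det]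
  letI : Fintype (LinearExtension Q) := inferInstanceAs (Fintype Q)
  let e : LinearExtension Q ≃ Q := Equiv.refl Q
  have htri : ((zetaM K Q).submatrix ⇑e ⇑e).BlockTriangular id := by
    intro i j hij
    simp only [Matrix.submatrix_apply, zetaM, Matrix.of_apply, ite_eq_right_iff]
    intro hle
    have hm := toLinearExtension.monotone hle
    exact absurd hij (not_lt.mpr hm)
  have h1 : ((zetaM K Q).submatrix ⇑e ⇑e).det = 1 := by
    rw [Matrix.det_of_upperTriangular htri]
    refine Finset.prod_eq_one fun i _ => ?_
    simp [zetaM]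
  rw [← Matrix.det_submatrix_equiv_self e, h1]
  exact isUnit_one

lemma comp_eq_mul {K P : Type*} [Field K] {n : ℕ} (D D' : Fin n → Finset P)
    {Q R : Type*} [Fintype Q] [Fintype R] (ι : Q → P) (κ : R → P) (M : Matrix Q R K) :
    (Matrix.of fun i k => ∑ x : Q, ∑ y : R, if ι x ∈ D i ∧ κ y ∈ D' k then M x y else 0) =
      (Matrix.of fun i x => if ι x ∈ D i then (1 : K) else 0) * M *
        (Matrix.of fun k y => if κ y ∈ D' k then (1 : K) else 0)ᵀ := by
  ext i k
  simp only [Matrix.mul_apply, Matrix.of_apply, Matrix.transpose_apply, Finset.sum_mul]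
  rw [Finset.sum_comm]
  refine Finset.sum_congr rfl fun b _ => Finset.sum_congr rfl fun a _ => ?_
  by_cases hp : ι a ∈ D i <;> by_cases hq : κ b ∈ D' k <;> simp [hp, hq]

/-- **Cut theorem for Moebius functions of posets (invertible form).**
Let `P` be a finite poset with a chain-partition `C₁, …, Cₙ` (pairwise disjoint
nonempty chains covering `P`, such that comparability of some pair of elements of `Cᵢ`
and `Cⱼ` forces comparability of all such pairs) and a `C`-cut splitting each `Cᵢ` into
a nonempty lower part `Cᵢˡᵒʷ` and a nonempty upper part `Cᵢᵘᵖ`, such that comparable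
elements `x ∈ Cᵢˡᵒʷ`, `y ∈ Cⱼᵘᵖ` always satisfy `x < y`. Let `U`, `Uˡᵒʷ`, `Uᵘᵖ` be the
Moebius matrices of `P`, `Pˡᵒʷ = ∪ᵢ Cᵢˡᵒʷ`, `Pᵘᵖ = ∪ᵢ Cᵢᵘᵖ` (with their induced
orders), let `cU`, `cUlow`, `cUup` denote their compressions along the respective
chains, and let `J = I + J₀` where `J₀` is the chain-comparability adjacency matrix.
If `J` is invertible, then `^c(U) = ^c(Uˡᵒʷ) + ^c(Uᵘᵖ) − ^c(Uˡᵒʷ)·J·^c(Uᵘᵖ)`. -/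
theorem moebius_cut_theorem_of_isUnit {K P : Type*} [Field K] [PartialOrder P] [Fintype P]
    {n : ℕ} (C lowC upC : Fin n → Finset P)
    (hChain : ∀ i, IsChain (· ≤ ·) (C i : Set P))
    (hCdisj : ∀ i j, i ≠ j → Disjoint (C i) (C j))
    (hCcover : ∀ x : P, ∃ i, x ∈ C i)
    (hCcomp : ∀ i j, i ≠ j → (∃ x ∈ C i, ∃ y ∈ C j, x ≤ y ∨ y ≤ x) →
      ∀ x ∈ C i, ∀ y ∈ C j, x ≤ y ∨ y ≤ x)
    (hsplit : ∀ i, lowC i ∪ upC i = C i)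
    (hludisj : ∀ i, Disjoint (lowC i) (upC i))
    (hlowne : ∀ i, (lowC i).Nonempty)
    (hupne : ∀ i, (upC i).Nonempty)
    (hcut : ∀ i j, ∀ x ∈ lowC i, ∀ y ∈ upC j, (x ≤ y ∨ y ≤ x) → x < y)
    (J : Matrix (Fin n) (Fin n) K)
    (hJ : J = 1 + Matrix.of fun i j : Fin n =>
      if i ≠ j ∧ ∀ x ∈ C i, ∀ y ∈ C j, x ≤ y ∨ y ≤ x then (1 : K) else 0)
    (cU cUlow cUup : Matrix (Fin n) (Fin n) K)
    (hcU : cU = chainComp C (id : P → P) (moebiusM K P))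
    (hcUlow : cUlow = chainComp lowC (Subtype.val : {x : P // ∃ i, x ∈ lowC i} → P)
      (moebiusM K {x : P // ∃ i, x ∈ lowC i}))
    (hcUup : cUup = chainComp upC (Subtype.val : {x : P // ∃ i, x ∈ upC i} → P)
      (moebiusM K {x : P // ∃ i, x ∈ upC i}))
    (hJunit : IsUnit J) :
    cU = cUlow + cUup - cUlow * J * cUup := by
  classical
  letI : DecidableEq P := fun a b => Classical.propDecidable _
  letI : DecidableEq {x : P // ∃ i, x ∈ lowC i} := fun a b => Classical.propDecidable _
  letI : DecidableEq {x : P // ∃ i, x ∈ upC i} := fun a b => Classical.propDecidable _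
  -- basic facts
  have hlowsub : ∀ i, lowC i ⊆ C i := fun i => by
    rw [← hsplit i]; exact Finset.subset_union_left
  have hupsub : ∀ i, upC i ⊆ C i := fun i => by
    rw [← hsplit i]; exact Finset.subset_union_right
  have hnotboth : ∀ (x : P) (i j : Fin n), x ∈ lowC i → x ∈ upC j → False := fun x i j hl hu =>
    lt_irrefl x (hcut i j x hl x hu (Or.inl le_rfl))
  have hlowuniq : ∀ (x : P) {i j : Fin n}, x ∈ lowC i → x ∈ lowC j → i = j := by
    intro x i j hi hj
    by_contra hij
    exact Finset.disjoint_left.mp (hCdisj i j hij) (hlowsub i hi) (hlowsub j hj)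
  have hupuniq : ∀ (x : P) {i j : Fin n}, x ∈ upC i → x ∈ upC j → i = j := by
    intro x i j hi hj
    by_contra hij
    exact Finset.disjoint_left.mp (hCdisj i j hij) (hupsub i hi) (hupsub j hj)
  have hmemCl : ∀ (x : P), (∃ i, x ∈ lowC i) → ∀ i, (x ∈ C i ↔ x ∈ lowC i) := by
    intro x hx i
    constructor
    · intro hC
      rw [← hsplit i, Finset.mem_union] at hC
      rcases hC with h | h
      · exact h
      · obtain ⟨j, hj⟩ := hx
        exact (hnotboth x j i hj h).elim
    · exact fun h => hlowsub i h
  have hmemCu : ∀ (x : P), (∃ i, x ∈ upC i) → ∀ i, (x ∈ C i ↔ x ∈ upC i) := by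
    intro x hx i
    constructor
    · intro hC
      rw [← hsplit i, Finset.mem_union] at hC
      rcases hC with h | h
      · obtain ⟨j, hj⟩ := hx
        exact (hnotboth x i j h hj).elim
      · exact h
    · exact fun h => hupsub i h
  -- the equivalence
  have hfbij : Function.Bijective
      (Sum.elim (Subtype.val : {x : P // ∃ i, x ∈ lowC i} → P)
        (Subtype.val : {x : P // ∃ i, x ∈ upC i} → P)) := by
    constructor
    · rintro (a | a) (b | b) hab
      · exact congrArg Sum.inl (Subtype.ext hab)
      · have hab' : (a : P) = (b : P) := hab
        obtain ⟨i, hi⟩ := a.2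
        obtain ⟨j, hj⟩ := b.2
        exact ((hnotboth (a : P) i j hi (by rw [hab']; exact hj)).elim)
      · have hab' : (a : P) = (b : P) := hab
        obtain ⟨i, hi⟩ := a.2
        obtain ⟨j, hj⟩ := b.2
        exact ((hnotboth (b : P) j i hj (by rw [← hab']; exact hi)).elim)
      · exact congrArg Sum.inr (Subtype.ext hab)
    · intro x
      obtain ⟨i, hi⟩ := hCcover x
      rw [← hsplit i, Finset.mem_union] at hi
      rcases hi with h | h
      · exact ⟨Sum.inl ⟨x, i, h⟩, rfl⟩
      · exact ⟨Sum.inr ⟨x, i, h⟩, rfl⟩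
  set e : ({x : P // ∃ i, x ∈ lowC i} ⊕ {x : P // ∃ i, x ∈ upC i}) ≃ P :=
    Equiv.ofBijective _ hfbij with hedef
  -- the block matrices
  set B : Matrix {x : P // ∃ i, x ∈ lowC i} {x : P // ∃ i, x ∈ upC i} K :=
    Matrix.of fun a b => if (a : P) ≤ (b : P) then 1 else 0 with hBdef
  set E : Matrix (Fin n) {x : P // ∃ i, x ∈ lowC i} K :=
    Matrix.of fun i a => if (a : P) ∈ lowC i then 1 else 0 with hEdef
  set F : Matrix (Fin n) {x : P // ∃ i, x ∈ upC i} K :=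
    Matrix.of fun i b => if (b : P) ∈ upC i then 1 else 0 with hFdef
  have hAdet : IsUnit (zetaM K {x : P // ∃ i, x ∈ lowC i}).det :=
    (Matrix.isUnit_iff_isUnit_det _).mp (zeta_isUnit K _)
  have hDdet : IsUnit (zetaM K {x : P // ∃ i, x ∈ upC i}).det :=
    (Matrix.isUnit_iff_isUnit_det _).mp (zeta_isUnit K _)
  -- the zeta matrix of P in block form
  have hZ : (zetaM K P).submatrix ⇑e ⇑e =
      fromBlocks (zetaM K {x : P // ∃ i, x ∈ lowC i}) B 0
        (zetaM K {x : P // ∃ i, x ∈ upC i}) := by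
    ext s t
    cases s with
    | inl a =>
      cases t with
      | inl b =>
        show (if (a : P) ≤ (b : P) then (1 : K) else 0) = if a ≤ b then 1 else 0
        simp [Subtype.coe_le_coe]
      | inr b => rfl
    | inr a =>
      cases t with
      | inl b =>
        show (if (a : P) ≤ (b : P) then (1 : K) else 0) = 0
        rw [if_neg]
        intro hab
        obtain ⟨i, hi⟩ := a.2
        obtain ⟨j, hj⟩ := b.2
        exact lt_irrefl _ (lt_of_le_of_lt hab (hcut j i _ hj _ hi (Or.inr hab)))
      | inr b =>
        show (if (a : P) ≤ (b : P) then (1 : K) else 0) = if a ≤ b then 1 else 0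
        simp [Subtype.coe_le_coe]
  -- the inverse block matrix
  have hAX : zetaM K {x : P // ∃ i, x ∈ lowC i} *
      (-((zetaM K {x : P // ∃ i, x ∈ lowC i})⁻¹ * B * (zetaM K {x : P // ∃ i, x ∈ upC i})⁻¹)) +
      B * (zetaM K {x : P // ∃ i, x ∈ upC i})⁻¹ = 0 := by
    rw [Matrix.mul_neg]
    simp only [← Matrix.mul_assoc]
    rw [Matrix.mul_nonsing_inv _ hAdet, Matrix.one_mul, neg_add_cancel]
  have hZW : (fromBlocks (zetaM K {x : P // ∃ i, x ∈ lowC i}) B 0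
        (zetaM K {x : P // ∃ i, x ∈ upC i})) *
      (fromBlocks (zetaM K {x : P // ∃ i, x ∈ lowC i})⁻¹
        (-((zetaM K {x : P // ∃ i, x ∈ lowC i})⁻¹ * B * (zetaM K {x : P // ∃ i, x ∈ upC i})⁻¹)) 0
        (zetaM K {x : P // ∃ i, x ∈ upC i})⁻¹) = 1 := by
    rw [Matrix.fromBlocks_multiply]
    rw [Matrix.mul_nonsing_inv _ hAdet, Matrix.mul_nonsing_inv _ hDdet, hAX]
    simp [Matrix.fromBlocks_one]
  have hmu : (moebiusM K P).submatrix ⇑e ⇑e =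
      fromBlocks (zetaM K {x : P // ∃ i, x ∈ lowC i})⁻¹
        (-((zetaM K {x : P // ∃ i, x ∈ lowC i})⁻¹ * B * (zetaM K {x : P // ∃ i, x ∈ upC i})⁻¹)) 0
        (zetaM K {x : P // ∃ i, x ∈ upC i})⁻¹ := by
    have h2 : (zetaM K P).submatrix ⇑e ⇑e *
        (fromBlocks (zetaM K {x : P // ∃ i, x ∈ lowC i})⁻¹
          (-((zetaM K {x : P // ∃ i, x ∈ lowC i})⁻¹ * B *
            (zetaM K {x : P // ∃ i, x ∈ upC i})⁻¹)) 0
          (zetaM K {x : P // ∃ i, x ∈ upC i})⁻¹) = 1 := by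
      rw [hZ]; exact hZW
    have h3 := Matrix.inv_eq_right_inv h2
    rw [Matrix.inv_submatrix_equiv] at h3
    exact h3
  -- the key combinatorial identity : B = Eᵀ * J * F
  have hB : B = Eᵀ * J * F := by
    ext z w
    obtain ⟨jz, hjz⟩ := z.2
    obtain ⟨lw, hlw⟩ := w.2
    have hEz : Eᵀ z jz = 1 := by
      simp [hEdef, Matrix.transpose_apply, hjz]
    have hFw : F lw w = 1 := by
      simp [hFdef, hlw]
    have hstep : ∀ l, (Eᵀ * J) z l = J jz l := by
      intro l
      rw [Matrix.mul_apply, Finset.sum_eq_single jz]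
      · rw [hEz, one_mul]
      · intro j _ hj
        have hzero : Eᵀ z j = 0 := by
          simp only [hEdef, Matrix.transpose_apply, Matrix.of_apply, ite_eq_right_iff]
          intro hm
          exact absurd (hlowuniq (z : P) hm hjz) hj
        rw [hzero, zero_mul]
      · intro hj; exact absurd (Finset.mem_univ _) hj
    have h1 : (Eᵀ * J * F) z w = J jz lw := by
      rw [Matrix.mul_apply, Finset.sum_eq_single lw]
      · rw [hstep, hFw, mul_one]
      · intro l _ hl
        have hzero : F l w = 0 := by
          simp only [hFdef, Matrix.of_apply, ite_eq_right_iff]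
          intro hm
          exact absurd (hupuniq (w : P) hm hlw) hl
        rw [hzero, mul_zero]
      · intro hl; exact absurd (Finset.mem_univ _) hl
    rw [h1, hJ]
    show (if (z : P) ≤ (w : P) then (1 : K) else 0) = _
    simp only [Matrix.add_apply, Matrix.one_apply, Matrix.of_apply]
    by_cases hjl : jz = lw
    · subst hjl
      have hzw : (z : P) < (w : P) := by
        rcases eq_or_ne (z : P) (w : P) with h | h
        · exact (hnotboth (z : P) jz jz hjz (h ▸ hlw)).elim
        · exact hcut jz jz _ hjz _ hlw
            (hChain jz (Finset.mem_coe.mpr (hlowsub jz hjz))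
              (Finset.mem_coe.mpr (hupsub jz hlw)) h)
      simp [hzw.le]
    · by_cases hall : ∀ x ∈ C jz, ∀ y ∈ C lw, x ≤ y ∨ y ≤ x
      · have hzw : (z : P) < (w : P) :=
          hcut jz lw _ hjz _ hlw (hall _ (hlowsub jz hjz) _ (hupsub lw hlw))
        rw [if_pos hzw.le, if_neg hjl,
          if_pos (⟨hjl, hall⟩ : jz ≠ lw ∧ ∀ x ∈ C jz, ∀ y ∈ C lw, x ≤ y ∨ y ≤ x), zero_add]
      · have hnle : ¬ (z : P) ≤ (w : P) := by
          intro hle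
          exact hall (hCcomp jz lw hjl
            ⟨(z : P), hlowsub jz hjz, (w : P), hupsub lw hlw, Or.inl hle⟩)
        simp [hnle, hjl, hall]
  -- compressions as matrix products
  have hElow : cUlow = E * (zetaM K {x : P // ∃ i, x ∈ lowC i})⁻¹ * Eᵀ := by
    rw [hcUlow, hEdef]
    exact comp_eq_mul lowC lowC Subtype.val Subtype.val (moebiusM K {x : P // ∃ i, x ∈ lowC i})
  have hEup : cUup = F * (zetaM K {x : P // ∃ i, x ∈ upC i})⁻¹ * Fᵀ := by
    rw [hcUup, hFdef]
    exact comp_eq_mul upC upC Subtype.val Subtype.val (moebiusM K {x : P // ∃ i, x ∈ upC i})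
  set G : Matrix (Fin n) P K := Matrix.of fun i (x : P) => if id x ∈ C i then (1 : K) else 0
    with hGdef
  have hcU2 : cU = G * moebiusM K P * Gᵀ := by
    rw [hcU, hGdef]
    exact comp_eq_mul C C id id (moebiusM K P)
  have hGE : G.submatrix id ⇑e = fromCols E F := by
    ext i s
    cases s with
    | inl a =>
      show (if (a : P) ∈ C i then (1 : K) else 0) = E i a
      rw [hEdef]
      show _ = if (a : P) ∈ lowC i then (1 : K) else 0
      by_cases h : (a : P) ∈ lowC i
      · rw [if_pos (hlowsub i h), if_pos h]
      · rw [if_neg (fun hc => h ((hmemCl (a : P) a.2 i).mp hc)), if_neg h]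
    | inr b =>
      show (if (b : P) ∈ C i then (1 : K) else 0) = F i b
      rw [hFdef]
      show _ = if (b : P) ∈ upC i then (1 : K) else 0
      by_cases h : (b : P) ∈ upC i
      · rw [if_pos (hupsub i h), if_pos h]
      · rw [if_neg (fun hc => h ((hmemCu (b : P) b.2 i).mp hc)), if_neg h]
  have hmain : cU = fromCols E F *
      (fromBlocks (zetaM K {x : P // ∃ i, x ∈ lowC i})⁻¹
        (-((zetaM K {x : P // ∃ i, x ∈ lowC i})⁻¹ * B * (zetaM K {x : P // ∃ i, x ∈ upC i})⁻¹)) 0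
        (zetaM K {x : P // ∃ i, x ∈ upC i})⁻¹) * fromRows Eᵀ Fᵀ := by
    rw [hcU2]
    calc G * moebiusM K P * Gᵀ
        = (G.submatrix id ⇑e) * ((moebiusM K P).submatrix ⇑e ⇑e) * (Gᵀ.submatrix ⇑e id) := by
          rw [Matrix.submatrix_mul_equiv, Matrix.submatrix_mul_equiv, Matrix.submatrix_id_id]
      _ = _ := by
          rw [hmu, ← Matrix.transpose_submatrix, hGE, Matrix.transpose_fromCols]
  rw [hmain, hB, hElow, hEup, Matrix.fromCols_mul_fromBlocks, Matrix.fromCols_mul_fromRows]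
  simp only [Matrix.mul_zero, add_zero, Matrix.mul_neg, Matrix.neg_mul, Matrix.add_mul,
    Matrix.zero_mul, zero_add, Matrix.mul_assoc]
  abel
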